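/- Let A be a real N×N matrix, B = (1/2)(A + Aᵀ) its symmetric part and C = (1/2)(A - Aᵀ) its skew-symmetric part. Assume B is positive definite. Then the spectral condition number of A satisfies κ(A) = ‖A‖₂·‖A⁻¹‖₂ ≤ (λ_max(B) + ρ(C)) / λ_min(B), where ρ(C) is the spectral radius of C and λ_max(B), λ_min(B) are the extreme eigenvalues of B. -/

import Mathlib

open Matrix
open scoped RealInnerProductSpace

set_option maxHeartbeats 1600000
set_option synthInstance.maxHeartbeats 400000

section Aux

variable {n : Type*} [Fintype n] [DecidableEq n]

/-- coordinates of `B x` in the eigenbasis. -/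
lemma aux_repr {B : Matrix n n ℝ} (hB : B.IsHermitian)
    (x : EuclideanSpace ℝ n) (i : n) :
    hB.eigenvectorBasis.repr (toEuclideanCLM (𝕜 := ℝ) B x) i
      = hB.eigenvalues i * hB.eigenvectorBasis.repr x i := by
  set v := hB.eigenvectorBasis with hv
  have ha : ∀ j, toEuclideanCLM (𝕜 := ℝ) B (v j) = hB.eigenvalues j • v j := by
    intro j
    apply (WithLp.equiv 2 (n → ℝ)).injective
    rw [show (WithLp.equiv 2 (n → ℝ)) (toEuclideanCLM (𝕜 := ℝ) B (v j)) = B *ᵥ (WithLp.equiv 2 (n → ℝ)) (v j) from rfl]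
    rw [show (WithLp.equiv 2 (n → ℝ)) (v j) = ⇑(v j) from rfl]
    rw [hv, hB.mulVec_eigenvectorBasis]
    rfl
  have hb : toEuclideanCLM (𝕜 := ℝ) B x
      = ∑ j, (hB.eigenvalues j * v.repr x j) • v j := by
    conv_lhs => rw [← v.sum_repr x, map_sum]
    refine Finset.sum_congr rfl fun j _ => ?_
    rw [_root_.map_smul, ha j, smul_smul, mul_comm]
  rw [hb, v.repr_apply_apply, Orthonormal.inner_right_fintype v.orthonormal, v.repr_apply_apply]

lemma aux_normsq (y : EuclideanSpace ℝ n) : ‖y‖ ^ 2 = ∑ i, (y i) ^ 2 := by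
  rw [EuclideanSpace.norm_eq, Real.sq_sqrt (by positivity)]
  exact Finset.sum_congr rfl fun i _ => by rw [Real.norm_eq_abs, sq_abs]

/-- quadratic form in eigen-coordinates -/
lemma aux_inner {B : Matrix n n ℝ} (hB : B.IsHermitian) (x : EuclideanSpace ℝ n) :
    ⟪x, toEuclideanCLM (𝕜 := ℝ) B x⟫
      = ∑ i, hB.eigenvalues i * (hB.eigenvectorBasis.repr x i) ^ 2 := by
  set v := hB.eigenvectorBasis with hv
  rw [← LinearIsometryEquiv.inner_map_map v.repr]
  rw [PiLp.inner_apply]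
  refine Finset.sum_congr rfl fun i _ => ?_
  rw [aux_repr hB x i]
  simp [RCLike.inner_apply]
  ring

end Aux

theorem stmt1 {n : Type*} [Fintype n] [DecidableEq n] [Nonempty n]
    (A : Matrix n n ℝ)
    (hBpd : ((1/2 : ℝ) • (A + Aᵀ)).PosDef) :
    ‖Matrix.toEuclideanCLM (𝕜 := ℝ) A‖ * ‖Matrix.toEuclideanCLM (𝕜 := ℝ) A⁻¹‖ ≤
      ((⨆ i, hBpd.isHermitian.eigenvalues i) +
        (spectralRadius ℂ (((1/2 : ℝ) • (A - Aᵀ)).map (algebraMap ℝ ℂ))).toReal) /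
        (⨅ i, hBpd.isHermitian.eigenvalues i) := by
  classical
  set B : Matrix n n ℝ := (1/2 : ℝ) • (A + Aᵀ) with hBdef
  set C : Matrix n n ℝ := (1/2 : ℝ) • (A - Aᵀ) with hCdef
  have hB : B.IsHermitian := hBpd.isHermitian
  set μ : n → ℝ := hB.eigenvalues with hμ
  set v := hB.eigenvectorBasis with hv
  -- basic eigenvalue facts
  have hpos : ∀ i, 0 < μ i := fun i => hBpd.eigenvalues_pos i
  have hbddA : BddAbove (Set.range μ) := Set.Finite.bddAbove (Set.finite_range μ)
  have hbddB : BddBelow (Set.range μ) := Set.Finite.bddBelow (Set.finite_range μ)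
  obtain ⟨i₀, hi₀⟩ : ∃ i, μ i = ⨅ j, μ j := exists_eq_ciInf_of_finite
  have hlmin : 0 < ⨅ j, μ j := hi₀ ▸ hpos i₀
  have hlmax : 0 < ⨆ j, μ j := lt_of_lt_of_le (hpos i₀) (le_ciSup hbddA i₀)
  have hmin_le : ∀ i, (⨅ j, μ j) ≤ μ i := fun i => ciInf_le hbddB i
  have hle_max : ∀ i, μ i ≤ ⨆ j, μ j := fun i => le_ciSup hbddA i
  -- algebraic identity A = B + C
  have hBC : B + C = A := by
    rw [hBdef, hCdef]
    module
  -- skewness of C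
  have hCskew : Cᵀ = -C := by
    rw [hCdef, Matrix.transpose_smul, Matrix.transpose_sub, transpose_transpose, ← smul_neg,
      neg_sub]
  -- skew quadratic form vanishes
  have hCzero : ∀ x' : n → ℝ, x' ⬝ᵥ (C *ᵥ x') = 0 := by
    intro x'
    have h1 : x' ⬝ᵥ (C *ᵥ x') = (x' ᵥ* C) ⬝ᵥ x' := Matrix.dotProduct_mulVec x' C x'
    have hC' : C = -Cᵀ := by rw [hCskew, neg_neg]
    have h2 : x' ᵥ* C = - (C *ᵥ x') := by
      conv_lhs => rw [hC']
      rw [Matrix.vecMul_neg, Matrix.vecMul_transpose]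
    have h3 : x' ⬝ᵥ (C *ᵥ x') = - (x' ⬝ᵥ (C *ᵥ x')) :=
      calc x' ⬝ᵥ (C *ᵥ x') = (x' ᵥ* C) ⬝ᵥ x' := h1
        _ = (-(C *ᵥ x')) ⬝ᵥ x' := by rw [h2]
        _ = -((C *ᵥ x') ⬝ᵥ x') := neg_dotProduct _ _
        _ = -(x' ⬝ᵥ (C *ᵥ x')) := by rw [dotProduct_comm]
    linarith
  -- dot product with A equals dot product with B
  have hdotAB : ∀ x' : n → ℝ, x' ⬝ᵥ (A *ᵥ x') = x' ⬝ᵥ (B *ᵥ x') := by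
    intro x'
    conv_lhs => rw [← hBC]
    rw [Matrix.add_mulVec, dotProduct_add, hCzero, add_zero]
  -- invertibility
  have hdet : IsUnit A.det := by
    rw [isUnit_iff_ne_zero]
    intro h0
    obtain ⟨w, hw0, hww⟩ := (Matrix.exists_mulVec_eq_zero_iff).mpr h0
    have := hBpd.dotProduct_mulVec_pos hw0
    rw [show star w = w from rfl] at this
    have hzero : w ⬝ᵥ (B *ᵥ w) = 0 := by
      rw [← hdotAB, hww, dotProduct_zero]
    rw [hzero] at this
    exact lt_irrefl 0 this
  -- inner products via euclidean CLM
  have hinner_dot : ∀ (M : Matrix n n ℝ) (x : EuclideanSpace ℝ n),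
      ⟪x, toEuclideanCLM (𝕜 := ℝ) M x⟫
        = (WithLp.equiv 2 (n → ℝ) x) ⬝ᵥ (M *ᵥ (WithLp.equiv 2 (n → ℝ) x)) := by
    intro M x
    rw [PiLp.inner_apply]
    simp only [RCLike.inner_apply, conj_trivial]
    rw [dotProduct]; exact Finset.sum_congr rfl fun i _ => mul_comm _ _
  -- lower bound for the quadratic form of B
  have hlow : ∀ x : EuclideanSpace ℝ n,
      (⨅ j, μ j) * ‖x‖ ^ 2 ≤ ⟪x, toEuclideanCLM (𝕜 := ℝ) A x⟫ := by
    intro x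
    have h1 : ⟪x, toEuclideanCLM (𝕜 := ℝ) A x⟫ = ⟪x, toEuclideanCLM (𝕜 := ℝ) B x⟫ := by
      rw [hinner_dot, hinner_dot, hdotAB]
    rw [h1, aux_inner hB x]
    have h2 : ‖x‖ ^ 2 = ∑ i, (v.repr x i) ^ 2 := by
      rw [← v.repr.norm_map x, aux_normsq]
    rw [h2, Finset.mul_sum]
    refine Finset.sum_le_sum fun i _ => ?_
    exact mul_le_mul_of_nonneg_right (hmin_le i) (sq_nonneg _)
  -- upper bound for norm of B
  have hBnorm : ‖toEuclideanCLM (𝕜 := ℝ) B‖ ≤ ⨆ j, μ j := by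
    refine ContinuousLinearMap.opNorm_le_bound _ hlmax.le fun x => ?_
    have h1 : ‖toEuclideanCLM (𝕜 := ℝ) B x‖ ^ 2 ≤ ((⨆ j, μ j) * ‖x‖) ^ 2 := by
      rw [← v.repr.norm_map (toEuclideanCLM (𝕜 := ℝ) B x), aux_normsq, mul_pow,
        ← v.repr.norm_map x, aux_normsq, Finset.mul_sum]
      refine Finset.sum_le_sum fun i _ => ?_
      rw [aux_repr hB x i, mul_pow]
      exact mul_le_mul_of_nonneg_right
        (pow_le_pow_left₀ (hpos i).le (hle_max i) 2) (sq_nonneg _)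
    have h2 := Real.sqrt_le_sqrt h1
    rwa [Real.sqrt_sq (norm_nonneg _), Real.sqrt_sq (by positivity)] at h2
  -- the complexified skew part
  set Cc : Matrix n n ℂ := C.map (algebraMap ℝ ℂ) with hCc
  have hskewc : Ccᴴ = -Cc := by
    rw [hCc, ← Matrix.conjTranspose_map (algebraMap ℝ ℂ)
      (fun x => by simp [Complex.conj_ofReal])]
    rw [show Cᴴ = Cᵀ from rfl, hCskew]
    ext i j
    simp
  have hnormal : IsStarNormal (toEuclideanCLM (𝕜 := ℂ) Cc) := by
    constructor
    have hstar : star (toEuclideanCLM (𝕜 := ℂ) Cc) = - toEuclideanCLM (𝕜 := ℂ) Cc := by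
      rw [← map_star, ← map_neg, Matrix.star_eq_conjTranspose, hskewc]
    rw [hstar]; exact (Commute.refl (toEuclideanCLM (𝕜 := ℂ) Cc)).neg_left
  have hρ : (spectralRadius ℂ Cc).toReal = ‖toEuclideanCLM (𝕜 := ℂ) Cc‖ := by
    have hspec : spectralRadius ℂ Cc = spectralRadius ℂ (toEuclideanCLM (𝕜 := ℂ) Cc) := by
      unfold spectralRadius
      rw [AlgEquiv.spectrum_eq (toEuclideanCLM (𝕜 := ℂ) (n := n)) Cc]
    rw [hspec, IsStarNormal.spectralRadius_eq_nnnorm]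
    simp
  -- real norm of C bounded by complex norm of Cc
  have hCnorm : ‖toEuclideanCLM (𝕜 := ℝ) C‖ ≤ ‖toEuclideanCLM (𝕜 := ℂ) Cc‖ := by
    refine ContinuousLinearMap.opNorm_le_bound _ (norm_nonneg _) fun x => ?_
    set x' : n → ℝ := WithLp.equiv 2 (n → ℝ) x with hx'
    set xc : EuclideanSpace ℂ n := (WithLp.equiv 2 (n → ℂ)).symm ((algebraMap ℝ ℂ) ∘ x')
      with hxc
    have hxnorm : ‖xc‖ = ‖x‖ := by
      rw [EuclideanSpace.norm_eq, EuclideanSpace.norm_eq]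
      congr 1
      refine Finset.sum_congr rfl fun i _ => ?_
      congr 1
      rw [show xc i = ((x' i : ℝ) : ℂ) from rfl, Complex.norm_real]
      rfl
    have hmv : ‖toEuclideanCLM (𝕜 := ℝ) C x‖
        = ‖(EuclideanSpace.equiv n ℂ).symm (Cc *ᵥ ((algebraMap ℝ ℂ) ∘ x'))‖ := by
      rw [EuclideanSpace.norm_eq, EuclideanSpace.norm_eq]
      congr 1
      refine Finset.sum_congr rfl fun i _ => ?_
      have h1 : (toEuclideanCLM (𝕜 := ℝ) C x) i = (C *ᵥ x') i := rfl
      have h2 : ((EuclideanSpace.equiv n ℂ).symm (Cc *ᵥ ((algebraMap ℝ ℂ) ∘ x'))) i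
          = (Cc *ᵥ ((algebraMap ℝ ℂ) ∘ x')) i := rfl
      rw [h1, h2, ← RingHom.map_mulVec (algebraMap ℝ ℂ) C x' i]
      simp [norm_algebraMap']
    have h3 := Matrix.l2_opNorm_mulVec Cc ((WithLp.equiv 2 (n → ℂ)).symm ((algebraMap ℝ ℂ) ∘ x'))
    rw [Matrix.cstar_norm_def] at h3
    rw [hmv]
    calc ‖(EuclideanSpace.equiv n ℂ).symm (Cc *ᵥ ((algebraMap ℝ ℂ) ∘ x'))‖
        ≤ ‖toEuclideanCLM (𝕜 := ℂ) Cc‖ * ‖xc‖ := h3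
      _ = ‖toEuclideanCLM (𝕜 := ℂ) Cc‖ * ‖x‖ := by rw [hxnorm]
  -- norm bound for A
  have hAnorm : ‖toEuclideanCLM (𝕜 := ℝ) A‖
      ≤ (⨆ j, μ j) + ‖toEuclideanCLM (𝕜 := ℂ) Cc‖ := by
    have hsplit : toEuclideanCLM (𝕜 := ℝ) A
        = toEuclideanCLM (𝕜 := ℝ) B + toEuclideanCLM (𝕜 := ℝ) C := by
      rw [← map_add, hBC]
    rw [hsplit]
    exact le_trans (norm_add_le _ _) (add_le_add hBnorm hCnorm)
  -- norm bound for A⁻¹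
  have hTinv : ‖toEuclideanCLM (𝕜 := ℝ) A⁻¹‖ ≤ (⨅ j, μ j)⁻¹ := by
    refine ContinuousLinearMap.opNorm_le_bound _ (by positivity) fun y => ?_
    set x : EuclideanSpace ℝ n := toEuclideanCLM (𝕜 := ℝ) A⁻¹ y with hx
    have hTx : toEuclideanCLM (𝕜 := ℝ) A x = y := by
      rw [hx, ← ContinuousLinearMap.mul_apply, ← _root_.map_mul, Matrix.mul_nonsing_inv _ hdet,
        _root_.map_one, ContinuousLinearMap.one_apply]
    have h1 : (⨅ j, μ j) * ‖x‖ ^ 2 ≤ ‖x‖ * ‖y‖ := by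
      calc (⨅ j, μ j) * ‖x‖ ^ 2 ≤ ⟪x, toEuclideanCLM (𝕜 := ℝ) A x⟫ := hlow x
        _ = ⟪x, y⟫ := by rw [hTx]
        _ ≤ ‖x‖ * ‖y‖ := real_inner_le_norm x y
    rcases eq_or_lt_of_le (norm_nonneg x) with h0 | h0
    · rw [← h0]
      positivity
    · have h2 : (⨅ j, μ j) * ‖x‖ ≤ ‖y‖ := by nlinarith
      rw [← mul_le_mul_iff_right₀ hlmin, ← mul_assoc, mul_inv_cancel₀ hlmin.ne', one_mul]
      exact h2
  -- final arithmetic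
  rw [hρ]
  calc ‖toEuclideanCLM (𝕜 := ℝ) A‖ * ‖toEuclideanCLM (𝕜 := ℝ) A⁻¹‖
      ≤ ((⨆ j, μ j) + ‖toEuclideanCLM (𝕜 := ℂ) Cc‖) * (⨅ j, μ j)⁻¹ :=
        mul_le_mul hAnorm hTinv (norm_nonneg _) (by positivity)
    _ = ((⨆ j, μ j) + ‖toEuclideanCLM (𝕜 := ℂ) Cc‖) / (⨅ j, μ j) := by
        rw [div_eq_mul_inv]
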